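/- Let X be a real Hilbert space, f ∈ Γ₀(X), R : X → X a nonexpansive linear operator, and S = R − Id. Suppose R is an isometry. Then z = Prox_f(Rz) if and only if f*(Sz) + f(z) + (1/2)‖Sz‖² = 0. -/

import Mathlib

open RealInnerProductSpace

/-- Let `f ∈ Γ₀(X)`, `R` a linear isometry (hence nonexpansive), `S = R - Id`.
Then `z = Prox_f (Rz)` (i.e. `z` minimizes `y ↦ f y + ½‖y - Rz‖²`) if and only if
`f*(Sz) + f(z) + ½‖Sz‖² = 0`. -/
theorem stmt17 {X : Type*} [NormedAddCommGroup X] [InnerProductSpace ℝ X] [CompleteSpace X]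
    (f : X → EReal) (hbot : ∀ x, f x ≠ ⊥) (hdom : ∃ x, f x ≠ ⊤)
    (hlsc : LowerSemicontinuous f)
    (hconv : ∀ x y : X, ∀ a b : ℝ, 0 ≤ a → 0 ≤ b → a + b = 1 →
      f (a • x + b • y) ≤ (a : EReal) * f x + (b : EReal) * f y)
    (R : X →L[ℝ] X) (hiso : ∀ x : X, ‖R x‖ = ‖x‖) (z : X) :
    (∀ y : X, f z + ((1 / 2 * ‖z - R z‖ ^ 2 : ℝ) : EReal) ≤
        f y + ((1 / 2 * ‖y - R z‖ ^ 2 : ℝ) : EReal)) ↔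
    (⨆ x : X, ((⟪x, R z - z⟫ : ℝ) : EReal) - f x) + f z +
        ((1 / 2 * ‖R z - z‖ ^ 2 : ℝ) : EReal) = 0 := by
  obtain ⟨x₀, hx₀⟩ := hdom
  obtain ⟨b₀, hb₀⟩ : ∃ b : ℝ, f x₀ = b := ⟨(f x₀).toReal, (EReal.coe_toReal hx₀ (hbot x₀)).symm⟩
  set s : X := R z - z with hs
  have hnorm : ‖z - R z‖ = ‖s‖ := by rw [hs, norm_sub_rev]
  -- key scalar identity from the isometry
  have hzs : ⟪z, s⟫ = -(1/2 * ‖s‖^2) := by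
    have h1 : ‖R z‖ = ‖z‖ := hiso z
    have h2 : (z + s : X) = R z := by rw [hs]; abel
    have h3 : ‖z + s‖^2 = ‖z‖^2 + 2*⟪z,s⟫ + ‖s‖^2 := norm_add_sq_real z s
    rw [h2, h1] at h3
    nlinarith
  set M : EReal := ⨆ x : X, ((⟪x, R z - z⟫ : ℝ) : EReal) - f x with hM
  have hterm : ∀ x : X, ∀ b : ℝ, f x = b →
      ((⟪x, R z - z⟫ : ℝ) : EReal) - f x = ((⟪x, s⟫ - b : ℝ) : EReal) := by
    intro x b hb
    rw [hb, ← hs, EReal.coe_sub]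
  have hMge : ((⟪x₀, s⟫ - b₀ : ℝ) : EReal) ≤ M :=
    hterm x₀ b₀ hb₀ ▸ le_iSup (fun x => ((⟪x, R z - z⟫ : ℝ) : EReal) - f x) x₀
  have hMbot : M ≠ ⊥ := fun h => by
    rw [h, le_bot_iff] at hMge
    exact EReal.coe_ne_bot _ hMge
  by_cases hz : f z = ⊤
  · constructor
    · intro h
      exfalso
      have := h x₀
      rw [hz, hb₀, EReal.top_add_of_ne_bot (by exact_mod_cast EReal.coe_ne_bot _),
        ← EReal.coe_add] at this
      exact (EReal.coe_lt_top _).not_ge this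
    · intro h
      exfalso
      rw [hz, EReal.add_top_of_ne_bot hMbot,
        EReal.top_add_of_ne_bot (by exact_mod_cast EReal.coe_ne_bot _)] at h
      exact EReal.top_ne_zero h
  · obtain ⟨a, ha⟩ : ∃ a : ℝ, f z = a := ⟨(f z).toReal, (EReal.coe_toReal hz (hbot z)).symm⟩
    have hMgeZ : ((⟪z, s⟫ - a : ℝ) : EReal) ≤ M :=
      hterm z a ha ▸ le_iSup (fun x => ((⟪x, R z - z⟫ : ℝ) : EReal) - f x) z
    -- the subgradient condition P, in two equivalent forms
    have keyP : (∀ x : X, f z + ((⟪x - z, s⟫ : ℝ) : EReal) ≤ f x) ↔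
        (∀ x : X, ((⟪x, R z - z⟫ : ℝ) : EReal) - f x ≤ ((⟪z, s⟫ - a : ℝ) : EReal)) := by
      constructor
      · intro h x
        by_cases hx : f x = ⊤
        · rw [hx]
          simp
        · obtain ⟨b, hb⟩ : ∃ b : ℝ, f x = b := ⟨(f x).toReal, (EReal.coe_toReal hx (hbot x)).symm⟩
          have h2 := h x
          rw [ha, hb, ← EReal.coe_add, EReal.coe_le_coe_iff] at h2
          rw [hterm x b hb, EReal.coe_le_coe_iff]
          have hip : ⟪x - z, s⟫ = ⟪x, s⟫ - ⟪z, s⟫ := inner_sub_left x z s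
          linarith
      · intro h x
        by_cases hx : f x = ⊤
        · rw [hx]; exact le_top
        · obtain ⟨b, hb⟩ : ∃ b : ℝ, f x = b := ⟨(f x).toReal, (EReal.coe_toReal hx (hbot x)).symm⟩
          have h2 := h x
          rw [hterm x b hb, EReal.coe_le_coe_iff] at h2
          rw [ha, hb, ← EReal.coe_add, EReal.coe_le_coe_iff]
          have hip : ⟪x - z, s⟫ = ⟪x, s⟫ - ⟪z, s⟫ := inner_sub_left x z s
          linarith
    -- P implies the prox minimality property
    have hPprox : (∀ x : X, f z + ((⟪x - z, s⟫ : ℝ) : EReal) ≤ f x) →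
        (∀ y : X, f z + ((1 / 2 * ‖z - R z‖ ^ 2 : ℝ) : EReal) ≤
          f y + ((1 / 2 * ‖y - R z‖ ^ 2 : ℝ) : EReal)) := by
      intro hP y
      by_cases hy : f y = ⊤
      · rw [hy, EReal.top_add_of_ne_bot (by exact_mod_cast EReal.coe_ne_bot _)]
        exact le_top
      obtain ⟨b, hb⟩ : ∃ b : ℝ, f y = b := ⟨(f y).toReal, (EReal.coe_toReal hy (hbot y)).symm⟩
      have h2 := hP y
      rw [ha, hb, ← EReal.coe_add, EReal.coe_le_coe_iff] at h2
      rw [ha, hb, ← EReal.coe_add, ← EReal.coe_add, EReal.coe_le_coe_iff, hnorm]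
      have hyR : (y : X) - R z = (y - z) - s := by rw [hs]; abel
      have hexp : ‖y - R z‖^2 = ‖y - z‖^2 - 2*⟪y - z, s⟫ + ‖s‖^2 := by
        rw [hyR, norm_sub_sq_real]
      nlinarith [sq_nonneg ‖y - z‖]
    -- the prox minimality property implies P (uses convexity)
    have hproxP : (∀ y : X, f z + ((1 / 2 * ‖z - R z‖ ^ 2 : ℝ) : EReal) ≤
          f y + ((1 / 2 * ‖y - R z‖ ^ 2 : ℝ) : EReal)) →
        (∀ x : X, f z + ((⟪x - z, s⟫ : ℝ) : EReal) ≤ f x) := by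
      intro h x
      by_cases hx : f x = ⊤
      · rw [hx]; exact le_top
      obtain ⟨b, hb⟩ : ∃ b : ℝ, f x = b := ⟨(f x).toReal, (EReal.coe_toReal hx (hbot x)).symm⟩
      rw [ha, hb, ← EReal.coe_add, EReal.coe_le_coe_iff]
      set Q : ℝ := ‖x - z‖^2 with hQ
      have hQ0 : 0 ≤ Q := sq_nonneg _
      have key : ∀ t : ℝ, 0 < t → t ≤ 1 → a + ⟪x - z, s⟫ ≤ b + t/2 * Q := by
        intro t ht ht1
        have hcv := hconv z x (1 - t) t (by linarith) ht.le (by ring)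
        rw [ha, hb, ← EReal.coe_mul, ← EReal.coe_mul, ← EReal.coe_add] at hcv
        have hmin := h ((1 - t) • z + t • x)
        have hpt : ((1 - t) • z + t • x : X) - R z = t • (x - z) - s := by
          rw [hs, sub_smul, one_smul, smul_sub]
          abel
        have hexp : ‖(1 - t) • z + t • x - R z‖^2 = t^2 * Q - 2 * (t * ⟪x - z, s⟫) + ‖s‖^2 := by
          rw [hpt, norm_sub_sq_real, norm_smul, real_inner_smul_left]
          rw [hQ, mul_pow]
          simp [abs_of_pos ht]
        have hmin2 : f z + ((1 / 2 * ‖z - R z‖ ^ 2 : ℝ) : EReal) ≤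
            (((1 - t) * a + t * b : ℝ) : EReal) +
              ((1 / 2 * ‖(1 - t) • z + t • x - R z‖ ^ 2 : ℝ) : EReal) :=
          hmin.trans (add_le_add_left hcv _)
        rw [ha, ← EReal.coe_add, ← EReal.coe_add, EReal.coe_le_coe_iff, hnorm, hexp] at hmin2
        have hmul : t * (a + ⟪x - z, s⟫) ≤ t * (b + t/2 * Q) := by nlinarith
        exact le_of_mul_le_mul_left hmul ht
      refine le_of_forall_pos_le_add ?_
      intro ε hε
      have htpos : 0 < min 1 (ε / (Q + 1)) := lt_min one_pos (div_pos hε (by linarith))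
      have hk := key (min 1 (ε / (Q + 1))) htpos (min_le_left _ _)
      have hle : min 1 (ε / (Q + 1)) ≤ ε / (Q + 1) := min_le_right _ _
      have h2 : min 1 (ε / (Q + 1)) / 2 * Q ≤ ε := by
        have h3 : min 1 (ε / (Q + 1)) * Q ≤ (ε / (Q + 1)) * Q :=
          mul_le_mul_of_nonneg_right hle hQ0
        have h4 : (ε / (Q + 1)) * Q ≤ ε := by
          rw [div_mul_eq_mul_div, div_le_iff₀ (by linarith)]
          nlinarith
        nlinarith
      linarith
    constructor
    · intro h
      have hMle : M ≤ ((⟪z, s⟫ - a : ℝ) : EReal) := iSup_le (keyP.mp (hproxP h))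
      have hMeq : M = ((⟪z, s⟫ - a : ℝ) : EReal) := le_antisymm hMle hMgeZ
      rw [hMeq, ha, ← EReal.coe_add, ← EReal.coe_add]
      norm_cast
      rw [hzs]
      ring
    · intro h
      -- show M ≤ ⟪z,s⟫ - a from the equality
      have hMtop : M ≠ ⊤ := by
        intro htop
        rw [htop, ha, EReal.top_add_of_ne_bot (by exact_mod_cast EReal.coe_ne_bot _),
          EReal.top_add_of_ne_bot (by exact_mod_cast EReal.coe_ne_bot _)] at h
        exact EReal.top_ne_zero h
      obtain ⟨m, hm⟩ : ∃ m : ℝ, M = m := ⟨M.toReal, (EReal.coe_toReal hMtop hMbot).symm⟩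
      rw [hm, ha, ← EReal.coe_add, ← EReal.coe_add] at h
      have hmr : m + a + 1 / 2 * ‖s‖ ^ 2 = 0 := by exact_mod_cast h
      have hMle : M ≤ ((⟪z, s⟫ - a : ℝ) : EReal) := by
        rw [hm, EReal.coe_le_coe_iff, hzs]
        linarith
      exact hPprox (keyP.mpr (iSup_le_iff.mp hMle))
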